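/- Let F be a closure system on a finite set G. Then the lattice ↓F of all closure systems contained in F is ranked by cardinality: if R is covered by R' in ↓F then |R| + 1 = |R'|. -/

import Mathlib

variable {α : Type*}

/-- A closure system on (the universe of) `α`: contains the full set and is
closed under (nonempty) intersections. -/
def IsClosureSystem (F : Set (Set α)) : Prop :=
  Set.univ ∈ F ∧ ∀ S ⊆ F, S.Nonempty → ⋂₀ S ∈ F

/-- `R` is a closure system contained in `F` (an element of the ideal `↓F`). -/
def DownF (F R : Set (Set α)) : Prop := IsClosureSystem R ∧ R ⊆ F

/-- Models of the implication `A → B`. -/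
def FAB (A B : Set α) : Set (Set α) := {D | ¬ A ⊆ D ∨ B ⊆ D}

/-- Closure operator of a closure system `R`. -/
def clOp (R : Set (Set α)) (X : Set α) : Set α := ⋂₀ {D | D ∈ R ∧ X ⊆ D}

/-- The closure system contained in `F` generated by the family `X`. -/
def genCS (F X : Set (Set α)) : Set (Set α) :=
  ⋂₀ {T | IsClosureSystem T ∧ T ⊆ F ∧ X ⊆ T}

/-- `R'` is covered by `R` in the lattice `↓F` of closure systems contained in `F`. -/
def CoversIn (F R' R : Set (Set α)) : Prop :=
  DownF F R' ∧ DownF F R ∧ R' ⊂ R ∧ ¬ ∃ T, DownF F T ∧ R' ⊂ T ∧ T ⊂ R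

/-- `A` is covered by `B` in the lattice `(F, ⊆)`. -/
def CoversF (F : Set (Set α)) (A B : Set α) : Prop :=
  A ∈ F ∧ B ∈ F ∧ A ⊂ B ∧ ¬ ∃ C ∈ F, A ⊂ C ∧ C ⊂ B

/-- `A` is meet-irreducible in the lattice `(R, ⊆)` of a closure system `R`. -/
def MeetIrredSet (R : Set (Set α)) (A : Set α) : Prop :=
  A ∈ R ∧ A ≠ Set.univ ∧ ¬ ∃ B ∈ R, ∃ C ∈ R, A ⊂ B ∧ A ⊂ C ∧ A = B ∩ C

/-- `R` is meet-irreducible in the lattice `↓F`. -/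
def MeetIrredDown (F R : Set (Set α)) : Prop :=
  DownF F R ∧ R ≠ F ∧ ¬ ∃ T, DownF F T ∧ ∃ U, DownF F U ∧ R ⊂ T ∧ R ⊂ U ∧ R = T ∩ U

/-- `R` is join-irreducible in the lattice `↓F` (bottom is `{univ}`,
join of a family is the generated closure system). -/
def JoinIrredDown (F R : Set (Set α)) : Prop :=
  DownF F R ∧ R ≠ {Set.univ} ∧
    ∀ Y : Set (Set (Set α)), Y.Finite → (∀ T ∈ Y, DownF F T) →
      R = genCS F (⋃₀ Y) → R ∈ Y

theorem stmt_14 {α : Type*} [Fintype α] (F R R' : Set (Set α))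
    (hF : IsClosureSystem F) (h : CoversIn F R R') :
    R.ncard + 1 = R'.ncard := by
  obtain ⟨⟨hRcs, hRF⟩, ⟨hR'cs, hR'F⟩, hss, hcov⟩ := h
  have hdne : (R' \ R).Nonempty := Set.nonempty_of_ssubset hss
  obtain ⟨A, hA, hAmin⟩ :=
    (by obtain ⟨A, hA, hm⟩ := (Set.toFinite (R' \ R)).exists_minimal hdne; exact ⟨A, hA, fun a' ha' hle => Set.Subset.antisymm (hm ha' hle) hle⟩ : ∃ A ∈ R' \ R, ∀ a' ∈ R' \ R, a' ⊆ A → A = a')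
  have hAR' : A ∈ R' := hA.1
  have hAR : A ∉ R := hA.2
  -- intersection of A with a member of R stays in insert A R
  have key : ∀ B ∈ R, A ∩ B ∈ insert A R := by
    intro B hB
    have hAB : A ∩ B ∈ R' := by
      have := hR'cs.2 {A, B} (by
        intro x hx; rcases hx with rfl | rfl
        · exact hAR'
        · exact hss.1 hB) ⟨A, by simp⟩
      rwa [Set.sInter_pair] at this
    by_cases hmem : A ∩ B ∈ R
    · exact Set.mem_insert_of_mem _ hmem
    · have : A = A ∩ B := hAmin (A ∩ B) ⟨hAB, hmem⟩ Set.inter_subset_left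
      rw [← this]; exact Set.mem_insert _ _
  have hTcs : IsClosureSystem (insert A R) := by
    constructor
    · exact Set.mem_insert_of_mem _ hRcs.1
    · intro S hS hSne
      by_cases hAS : A ∈ S
      · by_cases hS' : (S \ {A}).Nonempty
        · have hsub : S \ {A} ⊆ R := by
            intro x hx
            rcases hS (Set.diff_subset hx) with rfl | hxR
            · exact absurd rfl hx.2
            · exact hxR
          have hB : ⋂₀ (S \ {A}) ∈ R := hRcs.2 _ hsub hS'
          have hSeq : S = insert A (S \ {A}) := by
            rw [Set.insert_diff_singleton, Set.insert_eq_self.2 hAS]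
          rw [hSeq, Set.sInter_insert]
          exact key _ hB
        · have : S = {A} := by
            apply Set.eq_singleton_iff_unique_mem.2
            exact ⟨hAS, fun x hx => by
              by_contra hne
              exact hS' ⟨x, hx, hne⟩⟩
          rw [this, Set.sInter_singleton]; exact Set.mem_insert _ _
      · have : S ⊆ R := fun x hx => (hS hx).resolve_left (fun h => hAS (h ▸ hx))
        exact Set.mem_insert_of_mem _ (hRcs.2 S this hSne)
  have hTF : insert A R ⊆ F := Set.insert_subset (hR'F hAR') hRF
  have hRT : R ⊂ insert A R := Set.ssubset_insert hAR
  have hTR' : insert A R ⊆ R' := Set.insert_subset hAR' hss.1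
  have hTeq : insert A R = R' := by
    by_contra hne
    exact hcov ⟨insert A R, ⟨hTcs, hTF⟩, hRT, hTR'.lt_of_ne hne⟩
  rw [← hTeq, Set.ncard_insert_of_notMem hAR (Set.toFinite _)]
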